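/- The IFS {f₀, f₁} with fᵢ(x) = (x+i)/φ does not satisfy the Open Set Condition: there is no nonempty bounded open set U ⊆ ℝ with f₀(U) ∪ f₁(U) ⊆ U and f₀(U) ∩ f₁(U) = ∅. -/

import Mathlib

open Pointwise MeasureTheory ENNReal

noncomputable def phi : ℝ := (1 + Real.sqrt 5) / 2

noncomputable def f (i : Fin 2) (x : ℝ) : ℝ := (x + (i : ℕ)) / phi

lemma phi_pos : 0 < phi := by
  have : 0 ≤ Real.sqrt 5 := Real.sqrt_nonneg 5
  unfold phi; linarith

lemma phi_lt_two : phi < 2 := by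
  have h : Real.sqrt 5 < 3 := by
    have : Real.sqrt 5 < Real.sqrt 9 := Real.sqrt_lt_sqrt (by norm_num) (by norm_num)
    have h9 : Real.sqrt 9 = 3 := by
      rw [show (9:ℝ) = 3^2 by norm_num, Real.sqrt_sq (by norm_num)]
    linarith
  unfold phi; linarith

lemma image_eq' (i : Fin 2) (U : Set ℝ) :
    f i '' U = ((i:ℕ):ℝ)/phi +ᵥ (phi⁻¹ • U) := by
  ext x
  simp only [Set.mem_image, Set.mem_vadd_set, Set.mem_smul_set]
  constructor
  · rintro ⟨y, hy, rfl⟩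
    refine ⟨phi⁻¹ * y, ⟨y, hy, rfl⟩, ?_⟩
    unfold f
    field_simp
    rw [vadd_eq_add]
    ring
  · rintro ⟨z, ⟨y, hy, rfl⟩, rfl⟩
    refine ⟨y, hy, ?_⟩
    unfold f
    field_simp
    rw [vadd_eq_add]
    ring

lemma vol_image (i : Fin 2) (U : Set ℝ) :
    volume (f i '' U) = ENNReal.ofReal phi⁻¹ * volume U := by
  rw [image_eq', measure_vadd, Measure.addHaar_smul]
  simp [abs_of_nonneg (inv_nonneg.2 phi_pos.le)]

theorem no_open_set_condition :
    ¬ ∃ U : Set ℝ, U.Nonempty ∧ IsOpen U ∧ Bornology.IsBounded U ∧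
      f 0 '' U ∪ f 1 '' U ⊆ U ∧ Disjoint (f 0 '' U) (f 1 '' U) := by
  rintro ⟨U, hne, hopen, hbd, hsub, hdisj⟩
  have hpos : 0 < volume U := hopen.measure_pos _ hne
  have hfin : volume U < ⊤ := hbd.measure_lt_top
  have hmeas : MeasurableSet (f 1 '' U) := by
    rw [image_eq']
    exact ((hopen.smul₀ (inv_ne_zero phi_pos.ne')).vadd _).measurableSet
  have hle : volume (f 0 '' U) + volume (f 1 '' U) ≤ volume U := by
    rw [← measure_union hdisj hmeas]
    exact measure_mono hsub
  rw [vol_image, vol_image, ← two_mul, ← mul_assoc] at hle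
  have h2 : (2 : ℝ≥0∞) * ENNReal.ofReal phi⁻¹ ≤ 1 := by
    rw [← ENNReal.mul_le_mul_iff_left hpos.ne' hfin.ne, one_mul]
    exact hle
  have h3 : (2 : ℝ) * phi⁻¹ ≤ 1 := by
    have : ENNReal.ofReal (2 * phi⁻¹) ≤ ENNReal.ofReal 1 := by
      rw [ENNReal.ofReal_mul (by norm_num), ENNReal.ofReal_one]
      simpa using h2
    have := (ENNReal.ofReal_le_ofReal_iff (by norm_num)).1 this
    linarith
  have hinv : phi⁻¹ > 1/2 := by
    rw [gt_iff_lt, lt_inv_comm₀ (by norm_num) phi_pos]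
    simpa [one_div] using phi_lt_two
  linarith
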